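/- For even integers n and p with 0 < p ≤ n, the ratio C(n/2, p/2)² / C(n, p) is at least 1/p. Equivalently, the probability that a uniformly random binary vector of length n and Hamming weight p has exactly p/2 ones in each half is at least 1/p. -/

import Mathlib

open Finset

-- step of log-concavity: C(m,a)*C(m,b+1) ≤ C(m,a+1)*C(m,b) when a ≤ b
lemma step_lc (m a b : ℕ) (hab : a ≤ b) :
    m.choose a * m.choose (b + 1) ≤ m.choose (a + 1) * m.choose b := by
  rcases le_or_gt (b + 1) m with hbm | hbm
  · have key : (m.choose a * m.choose (b + 1)) * ((a + 1) * (b + 1)) ≤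
        (m.choose (a + 1) * m.choose b) * ((a + 1) * (b + 1)) := by
      have h1 : m.choose a * m.choose (b + 1) * ((a + 1) * (b + 1)) =
          (m.choose a * (a + 1)) * (m.choose (b + 1) * (b + 1)) := by ring
      have h2 : m.choose (a + 1) * m.choose b * ((a + 1) * (b + 1)) =
          (m.choose (a + 1) * (a + 1)) * (m.choose b * (b + 1)) := by ring
      rw [h1, h2, Nat.choose_succ_right_eq m a, Nat.choose_succ_right_eq m b]
      have h3 : (m.choose a * (a + 1)) * (m.choose b * (m - b)) =
          (m.choose a * m.choose b) * ((a + 1) * (m - b)) := by ring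
      have h4 : (m.choose a * (m - a)) * (m.choose b * (b + 1)) =
          (m.choose a * m.choose b) * ((b + 1) * (m - a)) := by ring
      rw [h3, h4]
      apply Nat.mul_le_mul_left
      exact Nat.mul_le_mul (by omega) (Nat.sub_le_sub_left hab m)
    exact Nat.le_of_mul_le_mul_right key (by positivity)
  · simp [Nat.choose_eq_zero_of_lt hbm]

-- iterated: C(m,a)*C(m,a+2d) ≤ C(m,a+d)^2
lemma iter_lc (m : ℕ) : ∀ d a : ℕ, m.choose a * m.choose (a + 2 * d) ≤ m.choose (a + d) ^ 2 := by
  intro d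
  induction d with
  | zero => intro a; simp [sq]
  | succ d ih =>
    intro a
    have h1 : a + 2 * (d + 1) = (a + 2 * d + 1) + 1 := by ring
    rw [h1]
    calc m.choose a * m.choose ((a + 2 * d + 1) + 1)
        ≤ m.choose (a + 1) * m.choose (a + 2 * d + 1) := step_lc m a (a + 2 * d + 1) (by omega)
      _ = m.choose (a + 1) * m.choose ((a + 1) + 2 * d) := by ring_nf
      _ ≤ m.choose ((a + 1) + d) ^ 2 := ih (a + 1)
      _ = m.choose (a + (d + 1)) ^ 2 := by ring_nf

lemma mid_lc (m k j : ℕ) (hj : j ≤ 2 * k) :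
    m.choose j * m.choose (2 * k - j) ≤ m.choose k ^ 2 := by
  rcases le_or_gt j k with h | h
  · have := iter_lc m (k - j) j
    have e1 : j + 2 * (k - j) = 2 * k - j := by omega
    have e2 : j + (k - j) = k := by omega
    rwa [e1, e2] at this
  · have := iter_lc m (j - k) (2 * k - j)
    have e1 : 2 * k - j + 2 * (j - k) = j := by omega
    have e2 : 2 * k - j + (j - k) = k := by omega
    rw [e1, e2] at this
    rwa [mul_comm]

-- 2*C(m,2k) ≤ C(m,k)^2 when k ≥ 1
lemma two_end (m k : ℕ) (hk : 1 ≤ k) : 2 * m.choose (2 * k) ≤ m.choose k ^ 2 := by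
  rcases le_or_gt (2 * k) m with h2k | h2k
  · have hmul : m.choose (2 * k) * (2 * k).choose k = m.choose k * (m - k).choose (2 * k - k) :=
      Nat.choose_mul (by omega)
    have hck : 2 ≤ (2 * k).choose k := by
      calc 2 ≤ (2 * k).choose 1 := by simp; omega
        _ ≤ (2 * k).choose ((2 * k) / 2) := Nat.choose_le_middle 1 (2 * k)
        _ = (2 * k).choose k := by congr 1; omega
    have h1 : (m - k).choose (2 * k - k) ≤ m.choose k := by
      have e : 2 * k - k = k := by omega
      rw [e]
      exact Nat.choose_le_choose k (Nat.sub_le m k)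
    calc 2 * m.choose (2 * k) ≤ (2 * k).choose k * m.choose (2 * k) :=
          Nat.mul_le_mul_right _ hck
      _ = m.choose k * (m - k).choose (2 * k - k) := by rw [← hmul]; ring
      _ ≤ m.choose k * m.choose k := Nat.mul_le_mul_left _ h1
      _ = m.choose k ^ 2 := (sq _).symm
  · simp [Nat.choose_eq_zero_of_lt h2k]

lemma main_lem (m k : ℕ) (hk : 1 ≤ k) :
    (2 * m).choose (2 * k) ≤ 2 * k * m.choose k ^ 2 := by
  obtain ⟨K, hK⟩ : ∃ K, 2 * k = K + 1 := ⟨2 * k - 1, by omega⟩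
  set f : ℕ → ℕ := fun i => m.choose i * m.choose (2 * k - i) with hf
  have hV : (2 * m).choose (2 * k) = ∑ i ∈ range (2 * k + 1), f i := by
    rw [two_mul m, Nat.add_choose_eq]
    rw [Finset.Nat.sum_antidiagonal_eq_sum_range_succ (fun i j => m.choose i * m.choose j)]
  have hpeel : ∑ i ∈ range (2 * k + 1), f i =
      f 0 + ((∑ i ∈ range K, f (i + 1)) + f (K + 1)) := by
    rw [hK, Finset.sum_range_succ' f (K + 1), Finset.sum_range_succ (fun i => f (i + 1)) K]
    ring
  have hends : f 0 + f (K + 1) ≤ m.choose k ^ 2 := by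
    have e0 : f 0 = m.choose (2 * k) := by simp [hf]
    have e1 : f (K + 1) = m.choose (2 * k) := by
      simp only [hf, ← hK, Nat.sub_self, Nat.choose_zero_right, mul_one]
    rw [e0, e1]
    have := two_end m k hk
    omega
  have hmidsum : ∑ i ∈ range K, f (i + 1) ≤ K * m.choose k ^ 2 := by
    calc ∑ i ∈ range K, f (i + 1)
        ≤ ∑ _i ∈ range K, m.choose k ^ 2 := by
          apply Finset.sum_le_sum
          intro i hi
          simp only [Finset.mem_range] at hi
          exact mid_lc m k (i + 1) (by omega)
      _ = K * m.choose k ^ 2 := by rw [Finset.sum_const, card_range, smul_eq_mul]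
  have hfin : 2 * k * m.choose k ^ 2 = m.choose k ^ 2 + K * m.choose k ^ 2 := by
    rw [hK]; ring
  omega

theorem stmt_4 (n p : ℕ) (hn : Even n) (hp : Even p) (hp0 : 0 < p) (hpn : p ≤ n) :
    n.choose p ≤ p * ((n / 2).choose (p / 2)) ^ 2 := by
  obtain ⟨m, hm⟩ := hn
  obtain ⟨k, hk⟩ := hp
  have hn2 : n = 2 * m := by omega
  have hp2 : p = 2 * k := by omega
  subst hn2 hp2
  have h1 : 2 * m / 2 = m := by omega
  have h2 : 2 * k / 2 = k := by omega
  rw [h1, h2]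
  exact main_lem m k (by omega)
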